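/- Let d ≥ 3 and let T_R, T_B be finite nonempty sets in ℝ^d. Let π : ℝ^d → ℝ^{d−2} be the coordinate projection x ↦ (x₃, …, x_d). Then P_0(T) = ∅ if and only if the projected dataset with red set π(T_R) and blue set π(T_B) is strongly separable in ℝ^{d−2}. -/

import Mathlib

open scoped RealInnerProductSpace

/-- The vector `e(a,b) = (a, b, 0, …, 0) ∈ ℝ^d`. -/
noncomputable def evec (d : ℕ) (a b : ℝ) : EuclideanSpace ℝ (Fin d) :=
  WithLp.toLp 2 (fun i => if (i : ℕ) = 0 then a else if (i : ℕ) = 1 then b else 0)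

/-- `P_0(T) ⊆ ℙ¹(ℝ)`: the set of directions `u = [a : b]` such that there are
`r ∈ conv(T_R)`, `s ∈ conv(T_B)` and `t ∈ ℝ` with `r − s = t · e(a,b)`. -/
def P0 (d : ℕ) (TR TB : Finset (EuclideanSpace ℝ (Fin d))) :
    Set (Projectivization ℝ (Fin 2 → ℝ)) :=
  {u | ∃ (v : Fin 2 → ℝ) (hv : v ≠ 0), Projectivization.mk ℝ v hv = u ∧
    ∃ r ∈ convexHull ℝ (TR : Set (EuclideanSpace ℝ (Fin d))),
      ∃ s ∈ convexHull ℝ (TB : Set (EuclideanSpace ℝ (Fin d))),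
        ∃ t : ℝ, r - s = t • evec d (v 0) (v 1)}

/-- The coordinate projection `π : ℝ^d → ℝ^{d−2}`, `x ↦ (x₃, …, x_d)`. -/
noncomputable def projLast2 (d : ℕ) (x : EuclideanSpace ℝ (Fin d)) :
    EuclideanSpace ℝ (Fin (d - 2)) :=
  WithLp.toLp 2 (fun i => x ⟨(i : ℕ) + 2, by omega⟩)

noncomputable def projL (d : ℕ) :
    EuclideanSpace ℝ (Fin d) →ₗ[ℝ] EuclideanSpace ℝ (Fin (d - 2)) where
  toFun := projLast2 d
  map_add' _ _ := rfl
  map_smul' _ _ := by ext i; simp [projLast2]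


/-- For `d ≥ 3` and finite nonempty `T_R, T_B ⊆ ℝ^d`, one has `P_0(T) = ∅`
iff the projected dataset `(π(T_R), π(T_B))` is strongly separable in `ℝ^{d−2}`, where
`π(x) = (x₃, …, x_d)`. -/
theorem stmt_3 (d : ℕ) (hd : 3 ≤ d) (TR TB : Finset (EuclideanSpace ℝ (Fin d)))
    (hR : TR.Nonempty) (hB : TB.Nonempty) :
    P0 d TR TB = ∅ ↔
    ∃ (w : EuclideanSpace ℝ (Fin (d - 2))) (c : ℝ), w ≠ 0 ∧
      (∀ r ∈ TR, ⟪w, projLast2 d r⟫ < c) ∧ (∀ b ∈ TB, c < ⟪w, projLast2 d b⟫) := by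
  set L := projL d with hL
  constructor
  · intro hP0
    -- the projected hulls are disjoint
    have hdisj : Disjoint (L '' (convexHull ℝ (TR : Set _)))
        (L '' (convexHull ℝ (TB : Set _))) := by
      rw [Set.disjoint_left]
      rintro x ⟨r, hr, hxr⟩ ⟨s, hs, hxs⟩
      -- build an element of P0
      have hcoord : ∀ i : Fin (d - 2), r ⟨(i : ℕ) + 2, by omega⟩ = s ⟨(i : ℕ) + 2, by omega⟩ := by
        intro i
        have := congrArg (fun y => y i) (hxr.trans hxs.symm)
        exact this
      set a := r ⟨0, by omega⟩ - s ⟨0, by omega⟩ with ha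
      set b := r ⟨1, by omega⟩ - s ⟨1, by omega⟩ with hb
      have hrs : r - s = (1 : ℝ) • evec d a b := by
        ext j
        show r j - s j = (1:ℝ) * _
        rw [one_mul]
        unfold evec
        change _ = (if (j:ℕ) = 0 then a else if (j:ℕ) = 1 then b else 0)
        rcases Nat.lt_or_ge (j : ℕ) 2 with hj | hj
        · interval_cases h : (j : ℕ)
          · simp only [if_pos rfl]
            have : j = (⟨0, by omega⟩ : Fin d) := Fin.ext h
            rw [this]; simpa using ha.symm
          · simp only [if_neg (by omega : (j:ℕ) ≠ 0), if_pos rfl]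
            have : j = (⟨1, by omega⟩ : Fin d) := Fin.ext h
            rw [this]; simpa using hb.symm
        · simp only [if_neg (by omega : (j:ℕ) ≠ 0), if_neg (by omega : (j:ℕ) ≠ 1)]
          have hj' : (j : ℕ) - 2 < d - 2 := by omega
          have := hcoord ⟨(j : ℕ) - 2, hj'⟩
          simp only at this
          have hjeq : (⟨(j:ℕ) - 2 + 2, by omega⟩ : Fin d) = j := by
            apply Fin.ext; simp; omega
          rw [hjeq] at this
          linarith [this]
      by_cases hab : (fun k : Fin 2 => if k = 0 then a else b) = 0
      · -- a = b = 0, so r = s, use v = (1,0)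
        have ha0 : a = 0 := congrFun hab 0
        have hb0 : b = 0 := congrFun hab 1
        have : (![1, 0] : Fin 2 → ℝ) ≠ 0 := by
          intro h; have := congrFun h 0; simp at this
        have hmem : Projectivization.mk ℝ ![1,0] this ∈ P0 d TR TB := by
          refine ⟨![1,0], this, rfl, r, hr, s, hs, 0, ?_⟩
          rw [zero_smul]
          rw [hrs, ha0, hb0]
          ext j
          show (1:ℝ) * _ = _
          unfold evec
          change (1:ℝ) * (if (j:ℕ) = 0 then (0:ℝ) else if (j:ℕ) = 1 then 0 else 0) = _
          split <;> simp
        rw [hP0] at hmem; exact hmem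
      · have hmem : Projectivization.mk ℝ _ hab ∈ P0 d TR TB := by
          refine ⟨_, hab, rfl, r, hr, s, hs, 1, ?_⟩
          simpa using hrs
        rw [hP0] at hmem; exact hmem
    -- separation
    have hcR : IsCompact (L '' (convexHull ℝ (TR : Set _))) :=
      ((TR.finite_toSet.isCompact_convexHull ℝ)).image (L.continuous_of_finiteDimensional)
    have hcB : IsCompact (L '' (convexHull ℝ (TB : Set _))) :=
      ((TB.finite_toSet.isCompact_convexHull ℝ)).image (L.continuous_of_finiteDimensional)
    have hvR : Convex ℝ (L '' (convexHull ℝ (TR : Set _))) :=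
      (convex_convexHull ℝ _).linear_image L
    have hvB : Convex ℝ (L '' (convexHull ℝ (TB : Set _))) :=
      (convex_convexHull ℝ _).linear_image L
    obtain ⟨f, u, v, hfu, huv, hfv⟩ :=
      geometric_hahn_banach_compact_closed hvR hcR hvB hcB.isClosed hdisj
    set w := (InnerProductSpace.toDual ℝ (EuclideanSpace ℝ (Fin (d - 2)))).symm f with hw
    have hwf : ∀ x, ⟪w, x⟫ = f x := fun x =>
      InnerProductSpace.toDual_symm_apply
    refine ⟨w, (u + v) / 2, ?_, ?_, ?_⟩
    · intro hw0
      obtain ⟨r0, hr0⟩ := hR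
      obtain ⟨b0, hb0⟩ := hB
      have h1 : f (L r0) < u := hfu _ ⟨r0, subset_convexHull ℝ _ hr0, rfl⟩
      have h2 : v < f (L b0) := hfv _ ⟨b0, subset_convexHull ℝ _ hb0, rfl⟩
      have e1 : ⟪w, L r0⟫ = f (L r0) := hwf _
      have e2 : ⟪w, L b0⟫ = f (L b0) := hwf _
      rw [hw0] at e1 e2
      simp only [inner_zero_left] at e1 e2
      linarith
    · intro r hr
      have h1 : f (L r) < u := hfu _ ⟨r, subset_convexHull ℝ _ hr, rfl⟩
      have : ⟪w, projLast2 d r⟫ = f (L r) := hwf (L r)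
      linarith
    · intro b hb
      have h1 : v < f (L b) := hfv _ ⟨b, subset_convexHull ℝ _ hb, rfl⟩
      have : ⟪w, projLast2 d b⟫ = f (L b) := hwf (L b)
      linarith
  · rintro ⟨w, c, hw0, hRlt, hBgt⟩
    rw [Set.eq_empty_iff_forall_notMem]
    rintro u ⟨v, hv, -, r, hr, s, hs, t, hrst⟩
    -- ⟪w, L x⟫ as a linear functional
    set g : EuclideanSpace ℝ (Fin d) →ₗ[ℝ] ℝ :=
      ((innerSL ℝ w).toLinearMap).comp L with hg
    have hgapp : ∀ x, g x = ⟪w, projLast2 d x⟫ := fun x => rfl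
    have hrg : g r < c := by
      have : r ∈ {x : EuclideanSpace ℝ (Fin d) | g x < c} :=
        convexHull_min (fun x hx => hRlt x hx) (convex_halfSpace_lt g.isLinear c) hr
      exact this
    have hsg : c < g s := by
      have : s ∈ {x : EuclideanSpace ℝ (Fin d) | c < g x} :=
        convexHull_min (fun x hx => hBgt x hx) (convex_halfSpace_gt g.isLinear c) hs
      exact this
    -- but L r = L s
    have hLeq : L r = L s := by
      ext i
      have := congrArg (fun y => y (⟨(i : ℕ) + 2, by omega⟩ : Fin d)) hrst
      have he : evec d (v 0) (v 1) ⟨(i : ℕ) + 2, by omega⟩ = 0 := by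
        unfold evec; simp
      show r ⟨(i:ℕ)+2, by omega⟩ = s ⟨(i:ℕ)+2, by omega⟩
      have hsub : r ⟨(i:ℕ)+2, by omega⟩ - s ⟨(i:ℕ)+2, by omega⟩ =
          t * evec d (v 0) (v 1) ⟨(i:ℕ)+2, by omega⟩ := this
      rw [he, mul_zero] at hsub
      linarith
    have : g r = g s := by rw [hg]; simp only [LinearMap.comp_apply, hLeq]
    linarith
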